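/- Consider tuples (τ_s, τ_o, π_s, π_o, α_s, α_o) where τ_s, τ_o are histories, π_s, π_o ∈ ℕ, and α_s, α_o ∈ O. Say Inv holds of such a tuple iff: ω τ_s ↔ (α_s = own); ω τ_o ↔ (α_o = own); π_s = 1 if α_s = own and π_s = 0 otherwise; π_o = 1 if α_o = own and π_o = 0 otherwise; and τ_s ⊥_ω τ_o. Suppose Inv holds of (τ_s, τ_o, π_s, π_o, α_s, α_o) and the coupled unlock/close transition fires: ω(τ_s ⊎ τ_o) holds, π_s > 0, α_s = own, and the post-state is τ_s' = τ_s ⊎ (fresh(τ_s ⊎ τ_o) ↦ U), π_s' = π_s − 1, α_s' = ōwn, with τ_o, π_o, α_o unchanged. Then τ_s' is disjoint from τ_o, and Inv holds of the post-state; in particular τ_s' ⊥_ω τ_o. -/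

import Mathlib

/-- The two operations recorded in lock histories. -/
inductive LU | L | U deriving DecidableEq

/-- A history: a finite map from positive timestamps to `{L, U}`. -/
abbrev Hist := Finmap (fun _ : ℕ+ => LU)

/-- `last_stamp h = max ({0} ∪ dom h)`. -/
noncomputable def lastStamp (h : Hist) : ℕ := h.keys.sup (fun t => (t : ℕ))

/-- `last_op h` is `h (last_stamp h)` if `last_stamp h ≠ 0`, and `U` otherwise. -/
noncomputable def lastOp (h : Hist) : LU :=
  if hpos : 0 < lastStamp h then (h.lookup ⟨lastStamp h, hpos⟩).getD LU.U else LU.U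

/-- `ω h` holds iff the last operation of `h` is a lock. -/
noncomputable def omega (h : Hist) : Prop := lastOp h = LU.L

/-- `fresh h = 1 + last_stamp h`, as a positive timestamp. -/
noncomputable def freshStamp (h : Hist) : ℕ+ := ⟨lastStamp h + 1, Nat.succ_pos _⟩

/-- `x ⊥_ω y`. -/
noncomputable def sepOmega (x y : Hist) : Prop :=
  (omega x → lastStamp y < lastStamp x) ∧
  (omega y → lastStamp x < lastStamp y) ∧
  x.Disjoint y
/-- Ownership values: `own` and `ōwn` (not owned). -/
inductive Own | own | nown deriving DecidableEq
/-- The invariant `SpinCSLInv` of the combined Spin/CSLX resource on the tuple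
`(τ_s, τ_o, π_s, π_o, α_s, α_o)`. -/
noncomputable def SpinCSLInv (τs τo : Hist) (πs πo : ℕ) (αs αo : Own) : Prop :=
  (omega τs ↔ αs = Own.own) ∧
  (omega τo ↔ αo = Own.own) ∧
  (πs = if αs = Own.own then 1 else 0) ∧
  (πo = if αo = Own.own then 1 else 0) ∧
  sepOmega τs τo

/-- the coupled unlock/close transition preserves `SpinCSLInv`:
if `SpinCSLInv` holds, `ω (τ_s ⊎ τ_o)` holds, `π_s > 0` and `α_s = own`, then the
post-state `τ_s' = τ_s ⊎ (fresh (τ_s ⊎ τ_o) ↦ U)`, `π_s' = π_s − 1`,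
`α_s' = ōwn` (with `τ_o`, `π_o`, `α_o` unchanged) has `τ_s'` disjoint from
`τ_o` and satisfies `SpinCSLInv`; in particular `τ_s' ⊥_ω τ_o`. -/
lemma lastStamp_union (s t : Hist) :
    lastStamp (s ∪ t) = max (lastStamp s) (lastStamp t) := by
  simp [lastStamp, Finmap.keys_union, Finset.sup_union]

lemma le_lastStamp_of_mem {h : Hist} {t : ℕ+} (ht : t ∈ h) : (t : ℕ) ≤ lastStamp h :=
  Finset.le_sup (Finmap.mem_keys.mpr ht)

lemma lastStamp_singleton (a : ℕ+) (b : LU) : lastStamp (Finmap.singleton a b) = a := by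
  simp [lastStamp, Finmap.keys_singleton]

theorem unlock_close_preserves_Inv (τs τo : Hist) (πs πo : ℕ) (αs αo : Own)
    (hInv : SpinCSLInv τs τo πs πo αs αo)
    (hω : omega (τs ∪ τo)) (hπ : 0 < πs) (hα : αs = Own.own) :
    (τs ∪ Finmap.singleton (freshStamp (τs ∪ τo)) LU.U).Disjoint τo ∧
    SpinCSLInv (τs ∪ Finmap.singleton (freshStamp (τs ∪ τo)) LU.U) τo (πs - 1) πo Own.nown αo ∧
    sepOmega (τs ∪ Finmap.singleton (freshStamp (τs ∪ τo)) LU.U) τo := by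
  obtain ⟨h1, h2, h3, h4, hsx, hsy, hdisj⟩ := hInv
  have hωs : omega τs := h1.mpr hα
  have hlt : lastStamp τo < lastStamp τs := hsx hωs
  have hnωo : ¬ omega τo := fun h => absurd (hsy h) (by omega)
  set f := freshStamp (τs ∪ τo) with hf
  have hfval : (f : ℕ) = lastStamp τs + 1 := by
    simp [hf, freshStamp, lastStamp_union]; omega
  have hfnotin : f ∉ τs := fun h => by
    have := le_lastStamp_of_mem h; omega
  have hfnotino : f ∉ τo := fun h => by
    have := le_lastStamp_of_mem h; omega
  have hLS : lastStamp (τs ∪ Finmap.singleton f LU.U) = (f : ℕ) := by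
    rw [lastStamp_union, lastStamp_singleton]; omega
  have hnω : ¬ omega (τs ∪ Finmap.singleton f LU.U) := by
    intro h
    unfold omega lastOp at h
    rw [dif_pos (by rw [hLS]; exact f.2)] at h
    have hkey : (⟨lastStamp (τs ∪ Finmap.singleton f LU.U), by rw [hLS]; exact f.2⟩ : ℕ+) = f :=
      PNat.coe_injective hLS
    rw [hkey, Finmap.lookup_union_right hfnotin, Finmap.lookup_singleton_eq] at h
    simp at h
  have hdisj' : (τs ∪ Finmap.singleton f LU.U).Disjoint τo := by
    intro x hx
    rcases Finmap.mem_union.mp hx with h | h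
    · exact hdisj x h
    · rw [Finmap.mem_singleton] at h; subst h; exact hfnotino
  refine ⟨hdisj', ⟨?_, h2, ?_, h4, ?_, ?_, hdisj'⟩, ?_, ?_, hdisj'⟩
  · simp [hnω]
  · simp [hα] at h3; simp [h3]
  · exact fun h => absurd h hnω
  · exact fun h => absurd h hnωo
  · exact fun h => absurd h hnω
  · exact fun h => absurd h hnωo
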